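/- Every compactifiable frame is strongly regular: if for a frame L there exist a compact regular frame M and a dense surjective frame homomorphism k : M → L, then every a ∈ L satisfies a = sSup {b | b ≺₀ a}, where ≺₀ is the greatest interpolative relation contained in the well-inside relation ≺ of L. -/

import Mathlib

/-- The well-inside relation of a frame: `b` is well inside `a` iff `bᶜ ⊔ a = ⊤`. -/
def WellInside {L : Type*} [Order.Frame L] (b a : L) : Prop := bᶜ ⊔ a = ⊤

/-- A frame is regular if every element is the join of the elements well inside it. -/
def IsRegularFrame (L : Type*) [Order.Frame L] : Prop :=
  ∀ a : L, a = sSup {b | WellInside b a}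

/-- A frame is compact if `⊤` is a compact element. -/
def IsCompactFrame (L : Type*) [Order.Frame L] : Prop :=
  ∀ S : Set L, ⊤ ≤ sSup S → ∃ T : Set L, T ⊆ S ∧ T.Finite ∧ ⊤ ≤ sSup T

/-- A binary relation `r` is interpolative if `r x y` implies there is `z`
with `r x z` and `r z y`. -/
def Interpolative {A : Type*} (r : A → A → Prop) : Prop :=
  ∀ x y, r x y → ∃ z, r x z ∧ r z y

/-- The greatest interpolative relation contained in `r`: the union of all
interpolative relations contained in `r`. -/
def gis {A : Type*} (r : A → A → Prop) : A → A → Prop :=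
  fun x y => ∃ s : A → A → Prop,
    (∀ a b, s a b → r a b) ∧ Interpolative s ∧ s x y

lemma wi_le {L : Type*} [Order.Frame L] {b a : L} (h : WellInside b a) : b ≤ a := by
  have : b = b ⊓ (bᶜ ⊔ a) := by rw [h, inf_top_eq]
  calc b = b ⊓ bᶜ ⊔ b ⊓ a := by rw [← inf_sup_left, h, inf_top_eq]
    _ = b ⊓ a := by rw [inf_compl_self, bot_sup_eq]
    _ ≤ a := inf_le_right

lemma wi_mono {L : Type*} [Order.Frame L] {b' b a a' : L} (hb : b' ≤ b) (ha : a ≤ a')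
    (h : WellInside b a) : WellInside b' a' := by
  refine top_le_iff.mp ?_
  rw [← h]
  exact sup_le_sup (compl_le_compl hb) ha

lemma wi_map {L M : Type*} [Order.Frame L] [Order.Frame M] (k : FrameHom M L) {b a : M}
    (h : WellInside b a) : WellInside (k b) (k a) := by
  have h1 : k bᶜ ≤ (k b)ᶜ := by
    rw [le_compl_iff_disjoint_right, disjoint_iff]
    rw [← map_inf, compl_inf_self, map_bot]
  refine top_le_iff.mp ?_
  calc (⊤ : L) = k (bᶜ ⊔ a) := by rw [h, map_top]
    _ = k bᶜ ⊔ k a := map_sup k _ _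
    _ ≤ (k b)ᶜ ⊔ k a := sup_le_sup_right h1 _

lemma wi_sSup_finite {M : Type*} [Order.Frame M] {y : M} {F : Set M} (hF : F.Finite)
    (h : ∀ c ∈ F, WellInside c y) : WellInside (sSup F) y := by
  refine Set.Finite.induction_on (motive := fun F _ => (∀ c ∈ F, WellInside c y) → WellInside (sSup F) y)
    F hF (fun _ => by simp [WellInside]) ?_ h
  clear h hF F
  intro a s hnm hfin ih h
  rw [sSup_insert]
  have h1 := h a (Set.mem_insert _ _)
  have h2 := ih fun c hc => h c (Set.mem_insert_of_mem _ hc)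
  · 
    show (a ⊔ sSup s)ᶜ ⊔ y = ⊤
    rw [compl_sup]
    refine top_le_iff.mp ?_
    calc (⊤ : M) = (aᶜ ⊔ y) ⊓ ((sSup s)ᶜ ⊔ y) := by rw [h1, h2, inf_top_eq]
      _ = aᶜ ⊓ (sSup s)ᶜ ⊔ y := by rw [sup_inf_right]
      _ ≤ aᶜ ⊓ (sSup s)ᶜ ⊔ y := le_refl _

lemma wi_interp {M : Type*} [Order.Frame M] (hMc : IsCompactFrame M) (hMr : IsRegularFrame M) :
    Interpolative (WellInside (L := M)) := by
  intro x y hxy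
  set S : Set M := {c | WellInside c y} with hS
  have hy : y = sSup S := hMr y
  have htop : ⊤ ≤ sSup ({xᶜ} ∪ S) := by
    rw [← hxy]
    refine sup_le (le_sSup (Set.mem_union_left _ rfl)) ?_
    rw [hy]
    exact sSup_le_sSup (Set.subset_union_right)
  obtain ⟨T, hTsub, hTfin, hTtop⟩ := hMc _ htop
  refine ⟨sSup (T ∩ S), ?_, ?_⟩
  · show xᶜ ⊔ sSup (T ∩ S) = ⊤
    refine top_le_iff.mp ?_
    refine le_trans hTtop (sSup_le fun t ht => ?_)
    rcases hTsub ht with h | h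
    · rw [Set.mem_singleton_iff] at h
      rw [h]; exact le_sup_left
    · exact (le_sSup (Set.mem_inter ht h)).trans le_sup_right
  · exact wi_sSup_finite (hTfin.inter_of_left S) fun c hc => hc.2

/-- Every compactifiable frame is strongly regular. -/
theorem compactifiable_stronglyRegular
    {L M : Type*} [Order.Frame L] [Order.Frame M]
    (hMc : IsCompactFrame M) (hMr : IsRegularFrame M)
    (k : FrameHom M L) (hdense : ∀ a : M, k a = ⊥ → a = ⊥)
    (hsurj : Function.Surjective k) :
    ∀ a : L, a = sSup {b | gis WellInside b a} := by
  intro a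
  refine le_antisymm ?_ ?_
  · obtain ⟨a', rfl⟩ := hsurj a
    conv_lhs => rw [hMr a']
    rw [map_sSup]
    refine sSup_le ?_
    rintro _ ⟨b', hb', rfl⟩
    refine le_sSup ?_
    refine ⟨fun x y => ∃ x' y' : M, WellInside x' y' ∧ x ≤ k x' ∧ k y' ≤ y, ?_, ?_, ?_⟩
    · rintro p q ⟨x', y', h, hx, hy⟩
      exact wi_mono hx hy (wi_map k h)
    · rintro p q ⟨x', y', h, hx, hy⟩
      obtain ⟨z, h1, h2⟩ := wi_interp hMc hMr x' y' h
      exact ⟨k z, ⟨x', z, h1, hx, le_refl _⟩, ⟨z, y', h2, le_refl _, hy⟩⟩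
    · exact ⟨b', a', hb', le_refl _, le_refl _⟩
  · refine sSup_le ?_
    rintro b ⟨s, hsub, _, hsb⟩
    exact wi_le (hsub _ _ hsb)
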